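/- Let G be a nontrivial finite cyclic group. Then the Radon transform is not injective on G: there exists a nonzero function f : G → ℂ such that ∑_{t ∈ ZMod n} f(x * γ(t)) = 0 for every integer n ≥ 2, every nontrivial homomorphism γ : ZMod n → G and every x ∈ G. -/

import Mathlib

/-- The Radon transform of `f` at `(x, γ)`: the sum of `f` over the geodesic
determined by the homomorphism `γ : C_n → G`, translated by `x`. -/
noncomputable def radonSum {G : Type*} [Group G] {n : ℕ} [NeZero n]
    (f : G → ℂ) (γ : Multiplicative (ZMod n) →* G) (x : G) : ℂ :=
  ∑ t : ZMod n, f (x * γ (Multiplicative.ofAdd t))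

/-- All Radon transforms of `f` (over geodesics of all lengths `n ≥ 2`) vanish. -/
def RadonNull (G : Type*) [Group G] (f : G → ℂ) : Prop :=
  ∀ (n : ℕ) (hn : 2 ≤ n) (γ : Multiplicative (ZMod n) →* G), γ ≠ 1 → ∀ x : G,
    haveI : NeZero n := ⟨by omega⟩
    radonSum f γ x = 0

/-- The Radon transform is injective on `G`. -/
def RadonInjective (G : Type*) [Group G] : Prop :=
  ∀ f : G → ℂ, RadonNull G f → f = 0
theorem radon_not_injective_of_cyclic {G : Type*} [Group G] [Fintype G] [IsCyclic G]
    [Nontrivial G] : ∃ f : G → ℂ, f ≠ 0 ∧ RadonNull G f := by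
  set m := Nat.card G with hm
  have hm0 : m ≠ 0 := Nat.card_pos.ne'
  haveI : NeZero m := ⟨hm0⟩
  have hζ : IsPrimitiveRoot (Complex.exp (2 * Real.pi * Complex.I / m)) m :=
    Complex.isPrimitiveRoot_exp m hm0
  set ψ : AddChar (ZMod m) ℂ := AddChar.zmodChar m hζ.pow_eq_one with hψdef
  have hψinj : ∀ a : ZMod m, ψ a = 1 → a = 0 := by
    intro a ha
    rw [hψdef, AddChar.zmodChar_apply] at ha
    have hdvd := (hζ.pow_eq_one_iff_dvd a.val).mp ha
    have := Nat.eq_zero_of_dvd_of_lt hdvd (ZMod.val_lt a)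
    exact (ZMod.val_eq_zero a).mp this
  set e : Multiplicative (ZMod m) ≃* G := (zmodCyclicMulEquiv (inferInstance : IsCyclic G))
  set χ : G →* ℂ := ψ.toMonoidHom.comp e.symm.toMonoidHom with hχdef
  have hχinj : ∀ g : G, χ g = 1 → g = 1 := by
    intro g hg
    have := hψinj (Multiplicative.toAdd (e.symm g)) hg
    have : e.symm g = 1 := this
    simpa using congrArg e this
  refine ⟨fun g => χ g, ?_, ?_⟩
  · intro h
    have : χ 1 = 0 := congrFun h 1
    simp at this
  · intro n hn γ hγ x
    haveI : NeZero n := ⟨by omega⟩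
    set θ : AddChar (ZMod n) ℂ := AddChar.toMonoidHomEquiv.symm (χ.comp γ) with hθdef
    have hθ : θ ≠ 0 := by
      intro h0
      apply hγ
      ext t
      have ht : θ (Multiplicative.toAdd t) = 1 := by
        rw [h0]; simp
      have : χ (γ t) = 1 := by
        simp [hθdef] at ht
        exact ht
      exact hχinj _ this
    have hsum : ∑ t : ZMod n, θ t = 0 := AddChar.sum_eq_zero_iff_ne_zero.mpr hθ
    have : radonSum (fun g => χ g) γ x = χ x * ∑ t : ZMod n, θ t := by
      rw [radonSum, Finset.mul_sum]
      refine Finset.sum_congr rfl fun t _ => ?_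
      simp [hθdef]
    rw [this, hsum, mul_zero]
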